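/- Let R be a ring, n ≥ 1, σ: R → Mₙ(R) a ring homomorphism and δ: R → Rⁿ a right σ-derivation. Then the free skew extension R⟨x₁,…,xₙ; σ, δ⟩ is isomorphic as an R-ring to the universal R-ring U(M, ι), where M = R ⊕ V is the rank-1 bimodule extension of the free right R-module V of rank n determined by σ and δ, and ι: R → M is the inclusion. -/

import Mathlib

/-- `δ : R → Rⁿ` is a right `σ`-derivation: additive and
`δ(rs) = δ(r)σ(s) + rδ(s)` (row-by-matrix multiplication componentwise). -/
def IsRightSigmaDeriv {R : Type} [Ring R] {n : ℕ}
    (σ : R →+* Matrix (Fin n) (Fin n) R) (δ : R → Fin n → R) : Prop :=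
  (∀ r s : R, δ (r + s) = δ r + δ s) ∧
  ∀ (r s : R) (j : Fin n), δ (r * s) j = (∑ i, δ r i * σ s i j) + r * δ s j

/-- `S` (an `R`-ring via `lam`) together with `x₁,…,xₙ` is a `(σ,δ)`-free skew
extension of `R`: the multiplicative submonoid generated by the `xᵢ` is free on them
(the induced monoid homomorphism from the free monoid on `n` letters is injective),
`S` is a free right `R`-module with basis the set of monomials in the `xᵢ`
(every element of `S` is uniquely a finite sum `Σ_w w·a_w`), and the commutation
rule `r·x_j = Σᵢ xᵢσ_{ij}(r) + δ_j(r)` holds. -/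
def IsSkewFreeExt {R : Type} [Ring R] {n : ℕ}
    (σ : R →+* Matrix (Fin n) (Fin n) R) (δ : R → Fin n → R)
    (S : Type) [Ring S] (lam : R →+* S) (x : Fin n → S) : Prop :=
  Function.Injective (FreeMonoid.lift x) ∧
  Function.Bijective (fun c : FreeMonoid (Fin n) →₀ R =>
    c.sum fun w a => FreeMonoid.lift x w * lam a) ∧
  ∀ (r : R) (j : Fin n), lam r * x j = (∑ i, x i * lam (σ r i j)) + lam (δ r j)

/-- `(U, lamU, jM)` is the universal `R`-ring `U(M, ι)` on the rank-1 bimodule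
extension `M = R ⊕ V` of the free right `R`-module `V = Rⁿ` determined by `σ` and
`δ`, along the inclusion `ι : R → M`.  Here the left action is
`r·(s, Σ v_j b_j) = (rs + Σ_j δ_j(r)b_j, Σ_{i,j} v_i σ_{ij}(r)b_j)` and the right
action is componentwise: `jM` is a bimodule map with `jM∘ι = lamU`, universal
among bimodule maps `f : M → A` into `R`-rings with `f∘ι = lamA`. -/
def IsUnivOnRankOneFree {R : Type} [Ring R] {n : ℕ}
    (σ : R →+* Matrix (Fin n) (Fin n) R) (δ : R → Fin n → R)
    (U : Type) [Ring U] (lamU : R →+* U) (jM : R × (Fin n → R) →+ U) : Prop :=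
  (∀ r : R, jM (r, 0) = lamU r) ∧
  (∀ (r s : R) (b : Fin n → R),
    jM (r * s + ∑ k, δ r k * b k, fun i => ∑ k, σ r i k * b k)
      = lamU r * jM (s, b)) ∧
  (∀ (s : R) (b : Fin n → R) (r : R),
    jM (s * r, fun i => b i * r) = jM (s, b) * lamU r) ∧
  ∀ (A : Type) [Ring A], ∀ (lamA : R →+* A) (f : R × (Fin n → R) →+ A),
    (∀ r : R, f (r, 0) = lamA r) →
    (∀ (r s : R) (b : Fin n → R),
      f (r * s + ∑ k, δ r k * b k, fun i => ∑ k, σ r i k * b k)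
        = lamA r * f (s, b)) →
    (∀ (s : R) (b : Fin n → R) (r : R),
      f (s * r, fun i => b i * r) = f (s, b) * lamA r) →
    ∃! φ : U →+* A, φ.comp lamU = lamA ∧ ∀ m, φ (jM m) = f m

/-- Auxiliary: the additive map sending a finitely supported `R`-coefficient
function on words to the corresponding sum of monomials. -/
noncomputable def skewAuxB {R : Type} [Ring R] {n : ℕ} {S : Type} [Ring S]
    (lam : R →+* S) (x : Fin n → S) : (FreeMonoid (Fin n) →₀ R) →+ S :=
  Finsupp.liftAddHom fun w =>
    (AddMonoidHom.mulLeft (FreeMonoid.lift x w)).comp lam.toAddMonoidHom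

theorem skewAuxB_apply {R : Type} [Ring R] {n : ℕ} {S : Type} [Ring S]
    (lam : R →+* S) (x : Fin n → S) (c : FreeMonoid (Fin n) →₀ R) :
    skewAuxB lam x c = c.sum fun w a => FreeMonoid.lift x w * lam a := by
  simp [skewAuxB, Finsupp.liftAddHom_apply]; rfl

theorem skewAuxB_single {R : Type} [Ring R] {n : ℕ} {S : Type} [Ring S]
    (lam : R →+* S) (x : Fin n → S) (w : FreeMonoid (Fin n)) (a : R) :
    skewAuxB lam x (Finsupp.single w a) = FreeMonoid.lift x w * lam a := by
  simp [skewAuxB]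

/-- The `(σ,δ)`-free skew extension of `R` is isomorphic as an `R`-ring to the
universal `R`-ring `U(M, ι)` on the rank-1 bimodule extension `M = R ⊕ Rⁿ`
determined by `σ` and `δ`, the isomorphism carrying `jM(s, b)` to
`s + Σᵢ xᵢ bᵢ`. -/
theorem skewFreeExt_iso_univRankOne {R : Type} [Ring R] {n : ℕ}
    (σ : R →+* Matrix (Fin n) (Fin n) R) (δ : R → Fin n → R)
    (hδ : IsRightSigmaDeriv σ δ)
    (S : Type) [Ring S] (lam : R →+* S) (x : Fin n → S)
    (hS : IsSkewFreeExt σ δ S lam x)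
    (U : Type) [Ring U] (lamU : R →+* U) (jM : R × (Fin n → R) →+ U)
    (hU : IsUnivOnRankOneFree σ δ U lamU jM) :
    ∃ e : U ≃+* S, (∀ r : R, e (lamU r) = lam r) ∧
      ∀ (s : R) (b : Fin n → R),
        e (jM (s, b)) = lam s + ∑ i, x i * lam (b i) := by
  obtain ⟨-, hbij, hcomm⟩ := hS
  obtain ⟨hU1, hU2, hU3, hUuniv⟩ := hU
  -- the generators of `U`
  obtain ⟨X, hX⟩ : ∃ X : Fin n → U, X = fun i => jM (0, Pi.single i 1) := ⟨_, rfl⟩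
  -- `skewAuxB lam x` is bijective
  have hBbij : Function.Bijective (skewAuxB lam x) := by
    have h : ⇑(skewAuxB lam x) = fun c : FreeMonoid (Fin n) →₀ R =>
        c.sum fun w a => FreeMonoid.lift x w * lam a := funext (skewAuxB_apply lam x)
    rw [h]; exact hbij
  have hsur : ∀ s : S, ∃ c, s = skewAuxB lam x c := fun s => by
    obtain ⟨c, hc⟩ := hBbij.2 s; exact ⟨c, hc.symm⟩
  -- the additive map `Ψ₀ : S →+ U`
  obtain ⟨Ψ₀, hΨ₀⟩ : ∃ Ψ₀ : S →+ U, ∀ c, Ψ₀ (skewAuxB lam x c) = skewAuxB lamU X c := by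
    refine ⟨(skewAuxB lamU X).comp
      (AddEquiv.ofBijective (skewAuxB lam x) hBbij).symm.toAddMonoidHom, fun c => ?_⟩
    have h0 : (AddEquiv.ofBijective (skewAuxB lam x) hBbij) c = skewAuxB lam x c := rfl
    have h1 : (AddEquiv.ofBijective (skewAuxB lam x) hBbij).symm (skewAuxB lam x c) = c := by
      rw [← h0, AddEquiv.symm_apply_apply]
    simp only [AddMonoidHom.comp_apply, AddEquiv.coe_toAddMonoidHom, h1]
  have hmono : ∀ (w : FreeMonoid (Fin n)) (a : R),
      Ψ₀ (FreeMonoid.lift x w * lam a) = FreeMonoid.lift X w * lamU a := by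
    intro w a
    rw [← skewAuxB_single lam x w a, hΨ₀, skewAuxB_single]
  -- `jM` decomposes in terms of `X`
  have hXlam : ∀ (j : Fin n) (c : R), X j * lamU c = jM (0, Pi.single j c) := by
    intro j c
    rw [hX]
    dsimp only
    rw [← hU3 0 (Pi.single j 1) c]
    congr 1
    refine Prod.ext (by simp) ?_
    funext k
    by_cases h : k = j
    · subst h; simp
    · simp [Pi.single_eq_of_ne h]
  have hdecomp : ∀ (s : R) (b : Fin n → R),
      jM (s, b) = lamU s + ∑ j, X j * lamU (b j) := by
    intro s b
    have hpair : ((s, b) : R × (Fin n → R))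
        = (s, 0) + ∑ j, ((0 : R), Pi.single j (b j)) := by
      refine Prod.ext ?_ ?_
      · simp [Prod.fst_sum]
      · simp [Prod.snd_sum, Finset.univ_sum_single]
    rw [hpair, map_add, map_sum, hU1]
    congr 1
    exact Finset.sum_congr rfl fun j _ => (hXlam j (b j)).symm
  -- commutation in U
  have hUcomm : ∀ (a : R) (i : Fin n),
      lamU a * X i = (∑ j, X j * lamU (σ a j i)) + lamU (δ a i) := by
    intro a i
    have h1 : lamU a * X i = jM (δ a i, fun j => σ a j i) := by
      rw [hX]
      dsimp only
      rw [← hU2 a 0 (Pi.single i 1)]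
      congr 1
      refine Prod.ext ?_ ?_
      · simp [Pi.single_apply, mul_ite]
      · funext j; simp [Pi.single_apply, mul_ite]
    rw [h1, hdecomp, add_comm]
  -- Ψ₀ commutes with left multiplication by x j
  have hC2 : ∀ (j : Fin n) (s : S), Ψ₀ (x j * s) = X j * Ψ₀ s := by
    intro j s
    obtain ⟨c, rfl⟩ := hsur s
    rw [hΨ₀, skewAuxB_apply, skewAuxB_apply, Finsupp.mul_sum, Finsupp.mul_sum,
      map_finsuppSum]
    refine Finsupp.sum_congr fun w _ => ?_
    have h1 : x j * (FreeMonoid.lift x w * lam (c w))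
        = FreeMonoid.lift x (FreeMonoid.of j * w) * lam (c w) := by
      rw [map_mul, FreeMonoid.lift_eval_of, mul_assoc]
    rw [h1, hmono, map_mul, FreeMonoid.lift_eval_of, mul_assoc]
  -- Ψ₀ commutes with left multiplication by lam a, monomial case
  have hC1m : ∀ (w : FreeMonoid (Fin n)) (a b : R),
      Ψ₀ (lam a * (FreeMonoid.lift x w * lam b))
        = lamU a * (FreeMonoid.lift X w * lamU b) := by
    intro w
    induction w using FreeMonoid.inductionOn' with
    | one =>
      intro a b
      have h := hmono 1 (a * b)
      simp only [map_one, one_mul] at h ⊢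
      rw [← map_mul, ← map_mul]
      exact h
    | of_mul i w' IH =>
      intro a b
      have hx : FreeMonoid.lift x (FreeMonoid.of i * w')
          = x i * FreeMonoid.lift x w' := by rw [map_mul, FreeMonoid.lift_eval_of]
      have hXx : FreeMonoid.lift X (FreeMonoid.of i * w')
          = X i * FreeMonoid.lift X w' := by rw [map_mul, FreeMonoid.lift_eval_of]
      have key : lam a * (FreeMonoid.lift x (FreeMonoid.of i * w') * lam b)
          = (∑ j, x j * (lam (σ a j i) * (FreeMonoid.lift x w' * lam b)))
            + lam (δ a i) * (FreeMonoid.lift x w' * lam b) := by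
        rw [hx, mul_assoc, ← mul_assoc (lam a), hcomm a i, add_mul, Finset.sum_mul]
        congr 1
        exact Finset.sum_congr rfl fun j _ => by rw [mul_assoc]
      rw [key, map_add, map_sum]
      have hterm : ∀ j : Fin n,
          Ψ₀ (x j * (lam (σ a j i) * (FreeMonoid.lift x w' * lam b)))
            = X j * (lamU (σ a j i) * (FreeMonoid.lift X w' * lamU b)) := by
        intro j; rw [hC2, IH]
      rw [Finset.sum_congr rfl fun j _ => hterm j, IH]
      rw [hXx, mul_assoc, ← mul_assoc (lamU a), hUcomm a i, add_mul, Finset.sum_mul]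
      congr 1
      exact Finset.sum_congr rfl fun j _ => by rw [mul_assoc]
  -- Ψ₀ commutes with left multiplication by lam a
  have hC1 : ∀ (a : R) (s : S), Ψ₀ (lam a * s) = lamU a * Ψ₀ s := by
    intro a s
    obtain ⟨c, rfl⟩ := hsur s
    rw [hΨ₀, skewAuxB_apply, skewAuxB_apply, Finsupp.mul_sum, Finsupp.mul_sum,
      map_finsuppSum]
    exact Finsupp.sum_congr fun w _ => hC1m w a (c w)
  -- Ψ₀ commutes with left multiplication by monomials
  have hC3 : ∀ (w : FreeMonoid (Fin n)) (t : S),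
      Ψ₀ (FreeMonoid.lift x w * t) = FreeMonoid.lift X w * Ψ₀ t := by
    intro w
    induction w using FreeMonoid.inductionOn' with
    | one => intro t; rw [map_one, map_one, one_mul, one_mul]
    | of_mul i w' IH =>
      intro t
      have h1 : FreeMonoid.lift x (FreeMonoid.of i * w')
          = x i * FreeMonoid.lift x w' := by rw [map_mul, FreeMonoid.lift_eval_of]
      have h2 : FreeMonoid.lift X (FreeMonoid.of i * w')
          = X i * FreeMonoid.lift X w' := by rw [map_mul, FreeMonoid.lift_eval_of]
      rw [h1, h2, mul_assoc, mul_assoc, hC2, IH]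
  -- Ψ₀ is multiplicative
  have hmul : ∀ s t : S, Ψ₀ (s * t) = Ψ₀ s * Ψ₀ t := by
    intro s t
    obtain ⟨c, rfl⟩ := hsur s
    rw [hΨ₀, skewAuxB_apply, skewAuxB_apply, Finsupp.sum_mul, Finsupp.sum_mul,
      map_finsuppSum]
    refine Finsupp.sum_congr fun w _ => ?_
    rw [mul_assoc, hC3, hC1, ← mul_assoc]
  have hone : Ψ₀ (1 : S) = 1 := by
    have h := hmono 1 1
    simpa using h
  -- the ring hom Ψ
  let Ψ : S →+* U :=
    { toFun := Ψ₀, map_one' := hone, map_mul' := hmul,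
      map_zero' := Ψ₀.map_zero, map_add' := Ψ₀.map_add }
  have hΨapp : ∀ s : S, Ψ s = Ψ₀ s := fun s => rfl
  have hΨlam : ∀ r : R, Ψ (lam r) = lamU r := by
    intro r
    rw [hΨapp]
    have h := hmono 1 r
    simpa using h
  have hΨx : ∀ i : Fin n, Ψ (x i) = X i := by
    intro i
    rw [hΨapp]
    have h := hmono (FreeMonoid.of i) 1
    simpa [FreeMonoid.lift_eval_of] using h
  -- the additive map f : M →+ S
  let f : R × (Fin n → R) →+ S := AddMonoidHom.mk'
    (fun m => lam m.1 + ∑ i, x i * lam (m.2 i))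
    (by
      intro m m'
      simp only [Prod.fst_add, Prod.snd_add, Pi.add_apply, map_add, mul_add,
        Finset.sum_add_distrib]
      abel)
  have hfapp : ∀ m : R × (Fin n → R), f m = lam m.1 + ∑ i, x i * lam (m.2 i) :=
    fun m => rfl
  have hf1 : ∀ r : R, f (r, 0) = lam r := by
    intro r; rw [hfapp]; simp
  have hf2 : ∀ (r s : R) (b : Fin n → R),
      f (r * s + ∑ k, δ r k * b k, fun i => ∑ k, σ r i k * b k)
        = lam r * f (s, b) := by
    intro r s b
    rw [hfapp, hfapp]
    have key : ∀ i : Fin n, lam r * (x i * lam (b i))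
        = (∑ j, x j * lam (σ r j i * b i)) + lam (δ r i * b i) := by
      intro i
      rw [← mul_assoc, hcomm r i, add_mul, Finset.sum_mul, map_mul]
      congr 1
      exact Finset.sum_congr rfl fun j _ => by rw [map_mul, mul_assoc]
    calc lam (r * s + ∑ k, δ r k * b k) + ∑ i, x i * lam (∑ k, σ r i k * b k)
        = lam (r * s) + ((∑ k, lam (δ r k * b k))
            + ∑ i, ∑ k, x i * lam (σ r i k * b k)) := by
          have hmu : ∀ i : Fin n, x i * lam (∑ k, σ r i k * b k)
              = ∑ k, x i * lam (σ r i k * b k) := fun i => by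
            rw [map_sum, Finset.mul_sum]
          rw [map_add, map_sum, Finset.sum_congr rfl fun i _ => hmu i, add_assoc]
      _ = lam r * lam s
            + ∑ i, ((∑ j, x j * lam (σ r j i * b i)) + lam (δ r i * b i)) := by
          rw [map_mul, Finset.sum_add_distrib, Finset.sum_comm, add_comm
            (∑ k : Fin n, lam (δ r k * b k))]
      _ = lam r * (lam s + ∑ i, x i * lam (b i)) := by
          rw [mul_add, Finset.mul_sum]
          congr 1
          exact Finset.sum_congr rfl fun i _ => (key i).symm
  have hf3 : ∀ (s : R) (b : Fin n → R) (r : R),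
      f (s * r, fun i => b i * r) = f (s, b) * lam r := by
    intro s b r
    rw [hfapp, hfapp]
    simp only [map_mul, add_mul, Finset.sum_mul, mul_assoc]
  obtain ⟨φ, ⟨hφ1, hφ2⟩, -⟩ := hUuniv S lam f hf1 hf2 hf3
  have hφlam : ∀ r : R, φ (lamU r) = lam r := fun r => RingHom.congr_fun hφ1 r
  have hφX : ∀ i : Fin n, φ (X i) = x i := by
    intro i
    rw [hX]
    dsimp only
    rw [hφ2 ((0 : R), (Pi.single i 1 : Fin n → R)), hfapp]
    have h : ∀ j : Fin n, x j * lam ((Pi.single i 1 : Fin n → R) j)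
        = if j = i then x i else 0 := by
      intro j
      by_cases h : j = i
      · subst h; simp
      · simp [Pi.single_eq_of_ne h, h]
    rw [Finset.sum_congr rfl fun j _ => h j]
    simp
  have hφXW : ∀ w : FreeMonoid (Fin n),
      φ (FreeMonoid.lift X w) = FreeMonoid.lift x w := by
    intro w
    induction w using FreeMonoid.inductionOn' with
    | one => simp
    | of_mul i w' IH =>
      have h1 : FreeMonoid.lift X (FreeMonoid.of i * w')
          = X i * FreeMonoid.lift X w' := by rw [map_mul, FreeMonoid.lift_eval_of]
      have h2 : FreeMonoid.lift x (FreeMonoid.of i * w')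
          = x i * FreeMonoid.lift x w' := by rw [map_mul, FreeMonoid.lift_eval_of]
      rw [h1, h2, map_mul, hφX, IH]
  -- Ψ ∘ φ = id
  obtain ⟨χ, -, hχu⟩ := hUuniv U lamU jM hU1 hU2 hU3
  have hidcond : (RingHom.id U).comp lamU = lamU ∧
      ∀ m, (RingHom.id U) (jM m) = jM m := ⟨RingHom.id_comp lamU, fun m => rfl⟩
  have hΨφcond : (Ψ.comp φ).comp lamU = lamU ∧ ∀ m, (Ψ.comp φ) (jM m) = jM m := by
    constructor
    · ext r
      simp only [RingHom.comp_apply, hφlam, hΨlam]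
    · intro m
      rw [RingHom.comp_apply, hφ2 m, hfapp, map_add, map_sum]
      have h : ∀ i : Fin n, Ψ (x i * lam (m.2 i)) = X i * lamU (m.2 i) := by
        intro i; rw [map_mul, hΨx, hΨlam]
      rw [Finset.sum_congr rfl fun i _ => h i, hΨlam, ← hdecomp]
  have hleft : ∀ u : U, Ψ (φ u) = u := by
    intro u
    have e1 := hχu (Ψ.comp φ) hΨφcond
    have e2 := hχu (RingHom.id U) hidcond
    exact RingHom.congr_fun (e1.trans e2.symm) u
  have hright : ∀ s : S, φ (Ψ s) = s := by
    intro s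
    obtain ⟨c, rfl⟩ := hsur s
    have h1 : Ψ (skewAuxB lam x c) = skewAuxB lamU X c := hΨ₀ c
    rw [h1, skewAuxB_apply, skewAuxB_apply, map_finsuppSum]
    refine Finsupp.sum_congr fun w _ => ?_
    rw [map_mul, hφXW, hφlam]
  refine ⟨{ toFun := φ, invFun := Ψ, left_inv := hleft, right_inv := hright,
            map_mul' := map_mul φ, map_add' := map_add φ }, fun r => hφlam r, ?_⟩
  intro s b
  show φ (jM (s, b)) = _
  rw [hφ2 (s, b), hfapp]
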